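/- Let n ≥ 1 and let A, B, C, D be real 2n×2n matrices such that the 4n×4n block matrix G = [[A, B], [C, D]] satisfies the conformal symplectic condition Gᵀ J_{4n} G = μ J̃_{4n} for some nonzero real constant μ. Let M be a 2n×2n symplectic matrix (Mᵀ J_{2n} M = J_{2n}) and assume CM + D is invertible. Then the matrix N = (AM + B)(CM + D)⁻¹ is symmetric. -/
import Mathlib

open Matrix

/-- If the block matrix `G = [[A,B],[C,D]]` is conformal symplectic
(`Gᵀ J₄ₙ G = μ J̃₄ₙ`, `μ ≠ 0`), `M` is symplectic and `CM + D` is invertible,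
then `N = (AM + B)(CM + D)⁻¹` is symmetric. -/
theorem symmetric_of_symplectic
    (n : ℕ) (hn : 1 ≤ n)
    (A B C D M : Matrix (Fin n ⊕ Fin n) (Fin n ⊕ Fin n) ℝ)
    (μ : ℝ) (hμ : μ ≠ 0)
    (J : Matrix (Fin n ⊕ Fin n) (Fin n ⊕ Fin n) ℝ)
    (hJ : J = Matrix.fromBlocks 0 1 (-1) 0)
    (hG : (Matrix.fromBlocks A B C D)ᵀ * Matrix.fromBlocks 0 1 (-1) 0 *
        Matrix.fromBlocks A B C D = μ • Matrix.fromBlocks J 0 0 (-J))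
    (hM : Mᵀ * J * M = J)
    (hinv : IsUnit (C * M + D)) :
    ((A * M + B) * (C * M + D)⁻¹)ᵀ = (A * M + B) * (C * M + D)⁻¹ := by
  -- extract block equations
  have hG2 := hG
  rw [Matrix.fromBlocks_smul, Matrix.fromBlocks_transpose, Matrix.fromBlocks_multiply,
    Matrix.fromBlocks_multiply] at hG2
  simp only [Matrix.mul_zero, Matrix.zero_mul, Matrix.mul_one, Matrix.one_mul,
    Matrix.mul_neg, Matrix.neg_mul, zero_add, add_zero, smul_zero, smul_neg,
    Matrix.fromBlocks_inj] at hG2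
  obtain ⟨e11, e12, e21, e22⟩ := hG2
  have h11 : Aᵀ*C = Cᵀ*A + μ • J := by
    rw [← e11]; abel
  have h12 : Aᵀ*D = Cᵀ*B := by
    have := e12; rw [neg_add_eq_zero] at this; exact this.symm
  have h21 : Bᵀ*C = Dᵀ*A := by
    have := e21; rw [neg_add_eq_zero] at this; exact this.symm
  have h22 : Bᵀ*D = Dᵀ*B - μ • J := by
    rw [sub_eq_add_neg, ← e22]; abel
  set K := C * M + D with hK
  set L := A * M + B with hL
  have expand1 : Lᵀ * K = Mᵀ*(Aᵀ*C)*M + Mᵀ*(Aᵀ*D) + Bᵀ*C*M + Bᵀ*D := by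
    simp only [hK, hL, Matrix.transpose_add, Matrix.transpose_mul, Matrix.add_mul,
      Matrix.mul_add, Matrix.mul_assoc]
    abel
  have expand2 : Kᵀ * L = Mᵀ*(Cᵀ*A)*M + Mᵀ*(Cᵀ*B) + Dᵀ*A*M + Dᵀ*B := by
    simp only [hK, hL, Matrix.transpose_add, Matrix.transpose_mul, Matrix.add_mul,
      Matrix.mul_add, Matrix.mul_assoc]
    abel
  have hMJ : Mᵀ * (μ • J) * M = μ • J := by
    rw [Matrix.mul_smul, Matrix.smul_mul, hM]
  have hkey : Lᵀ * K = Kᵀ * L := by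
    rw [expand1, expand2, h11, h12, h21, h22, Matrix.mul_add, Matrix.add_mul, hMJ]
    abel
  have hdet : IsUnit K.det := (Matrix.isUnit_iff_isUnit_det K).mp hinv
  have hdetT : IsUnit Kᵀ.det := by rwa [Matrix.det_transpose]
  rw [Matrix.transpose_mul, Matrix.transpose_nonsing_inv]
  have hfin : Lᵀ = Kᵀ * (L * K⁻¹) := by
    rw [← Matrix.mul_assoc]
    calc Lᵀ = Lᵀ * (K * K⁻¹) := by rw [Matrix.mul_nonsing_inv K hdet, Matrix.mul_one]
      _ = (Lᵀ * K) * K⁻¹ := by rw [Matrix.mul_assoc]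
      _ = (Kᵀ * L) * K⁻¹ := by rw [hkey]
  rw [hfin, ← Matrix.mul_assoc, Matrix.nonsing_inv_mul Kᵀ hdetT, Matrix.one_mul]
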